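/- Let X be a compact metric space and f : X → X a continuous map such that f^n = id_X for some n > 0 (i.e., (X,f) is periodic). Then (X,f) has shadowing if and only if X is totally disconnected. -/

import Mathlib

/-- The system `(X, f)` has shadowing. -/
def HasShadowing {X : Type*} [MetricSpace X] (f : X → X) : Prop :=
  ∀ ε > (0 : ℝ), ∃ δ > (0 : ℝ), ∀ x : ℕ → X,
    (∀ i : ℕ, dist (f (x i)) (x (i + 1)) < δ) →
      ∃ z : X, ∀ i : ℕ, dist (f^[i] z) (x i) < ε

section Aux

variable {X : Type*}

/-- From a `ReflTransGen` witness we can extract an eventually constant chain function. -/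
lemma exists_chain_fun {r : X → X → Prop} (hr : ∀ x y, r x y → r y y) {a b : X}
    (ha : r a a) (h : Relation.ReflTransGen r a b) :
    ∃ m : ℕ, ∃ c : ℕ → X, c 0 = a ∧ (∀ i, m ≤ i → c i = b) ∧ ∀ i, r (c i) (c (i + 1)) := by
  induction h with
  | refl => exact ⟨0, fun _ => a, rfl, fun i _ => rfl, fun i => ha⟩
  | @tail b' b hab' hb'b ih =>
    obtain ⟨m, c, h0, hm, hstep⟩ := ih
    refine ⟨m + 1, fun i => if i ≤ m then c i else b, by simp [h0], ?_, ?_⟩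
    · intro i hi
      simp [show ¬ i ≤ m by omega]
    · intro i
      by_cases h1 : i ≤ m
      · by_cases h2 : i + 1 ≤ m
        · simpa [h1, h2] using hstep i
        · have hieq : i = m := by omega
          subst hieq
          simpa [h1, h2, hm i le_rfl] using hb'b
      · simpa [h1, show ¬ i + 1 ≤ m by omega] using hr _ _ hb'b

variable [MetricSpace X]

/-- In a preconnected set, any two points are connected by a `δ`-chain inside the set. -/
lemma reflTransGen_of_isPreconnected {s : Set X} (hs : IsPreconnected s) {a b : X}
    (ha : a ∈ s) (hb : b ∈ s) {δ : ℝ} (hδ : 0 < δ) :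
    Relation.ReflTransGen (fun x y => x ∈ s ∧ y ∈ s ∧ dist x y < δ) a b := by
  by_contra hnb
  set r : X → X → Prop := fun x y => x ∈ s ∧ y ∈ s ∧ dist x y < δ with hrdef
  set R : Set X := {y | Relation.ReflTransGen r a y} with hRdef
  have h := hs (⋃ y ∈ s ∩ R, Metric.ball y δ) (⋃ y ∈ s \ R, Metric.ball y δ)
      (isOpen_biUnion fun _ _ => Metric.isOpen_ball)
      (isOpen_biUnion fun _ _ => Metric.isOpen_ball)
      ?_ ?_ ?_
  · obtain ⟨w, hws, hwu, hwv⟩ := h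
    rw [Set.mem_iUnion₂] at hwu hwv
    obtain ⟨y, ⟨hys, hyR⟩, hwy⟩ := hwu
    obtain ⟨y', ⟨hy's, hy'R⟩, hwy'⟩ := hwv
    have hwR : w ∈ R := by
      refine Relation.ReflTransGen.tail hyR ⟨hys, hws, ?_⟩
      rw [dist_comm]
      exact Metric.mem_ball.mp hwy
    exact hy'R (Relation.ReflTransGen.tail hwR ⟨hws, hy's, Metric.mem_ball.mp hwy'⟩)
  · intro y hy
    by_cases hyR : y ∈ R
    · exact Set.mem_union_left _ (Set.mem_biUnion ⟨hy, hyR⟩ (Metric.mem_ball_self hδ))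
    · exact Set.mem_union_right _ (Set.mem_biUnion ⟨hy, hyR⟩ (Metric.mem_ball_self hδ))
  · exact ⟨a, ha, Set.mem_biUnion ⟨ha, Relation.ReflTransGen.refl⟩ (Metric.mem_ball_self hδ)⟩
  · exact ⟨b, hb, Set.mem_biUnion ⟨hb, hnb⟩ (Metric.mem_ball_self hδ)⟩

/-- A totally disconnected compact metric space with a periodic map has shadowing. -/
lemma hasShadowing_of_totallyDisconnected [CompactSpace X] [TotallyDisconnectedSpace X]
    (f : X → X) (hf : Continuous f) {n : ℕ} (hn : 0 < n) (hfn : f^[n] = id) :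
    HasShadowing f := by
  classical
  intro ε hε
  rcases isEmpty_or_nonempty X with hX | hX
  · exact ⟨1, one_pos, fun x _ => (IsEmpty.false (x 0)).elim⟩
  -- clopen cover by small sets
  have hsmall : ∀ x : X, ∃ V : Set X, IsClopen V ∧ x ∈ V ∧ V ⊆ Metric.ball x (ε / 3) :=
    fun x => compact_exists_isClopen_in_isOpen Metric.isOpen_ball
      (Metric.mem_ball_self (by linarith))
  choose W hWclopen hWmem hWsub using hsmall
  obtain ⟨t, ht⟩ := IsCompact.elim_finite_subcover isCompact_univ W
    (fun x => (hWclopen x).2) (fun y _ => Set.mem_iUnion.mpr ⟨y, hWmem y⟩)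
  set k := Fintype.card {x // x ∈ t} with hk
  set e : Fin k → X := fun i => ((Fintype.equivFin {x // x ∈ t}).symm i : X) with he
  set U : Fin k → Set X := fun i => W (e i) with hU
  have hUclopen : ∀ i, IsClopen (U i) := fun i => hWclopen _
  have hex : ∀ y : X, ∃ i : Fin k, y ∈ U i := by
    intro y
    obtain ⟨x, hx, hyx⟩ := Set.mem_iUnion₂.mp (ht (Set.mem_univ y))
    refine ⟨Fintype.equivFin {x // x ∈ t} ⟨x, hx⟩, ?_⟩
    have hee : e (Fintype.equivFin {x // x ∈ t} ⟨x, hx⟩) = x := by simp [he]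
    show y ∈ W (e (Fintype.equivFin {x // x ∈ t} ⟨x, hx⟩))
    rw [hee]
    exact hyx
  have hnefil : ∀ y : X, (Finset.univ.filter fun i => y ∈ U i).Nonempty := by
    intro y
    obtain ⟨i, hi⟩ := hex y
    exact ⟨i, by simp [hi]⟩
  set c : X → Fin k := fun y => (Finset.univ.filter fun i => y ∈ U i).min' (hnefil y) with hc
  have hcU : ∀ y, y ∈ U (c y) := by
    intro y
    have := Finset.min'_mem _ (hnefil y)
    simpa using this
  have hcle : ∀ y i, y ∈ U i → c y ≤ i := by
    intro y i hi
    exact Finset.min'_le _ i (by simp [hi])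
  -- fibers of c are open
  have hfiber : ∀ i : Fin k, {y : X | c y = i} = U i \ ⋃ j ∈ {j : Fin k | j < i}, U j := by
    intro i
    ext y
    simp only [Set.mem_setOf_eq, Set.mem_diff, Set.mem_iUnion, not_exists]
    constructor
    · intro hcy
      refine ⟨hcy ▸ hcU y, fun j hj hyj => ?_⟩
      exact absurd (hcle y j hyj) (by rw [hcy]; exact not_le.mpr hj)
    · rintro ⟨hyi, hnot⟩
      refine le_antisymm (hcle y i hyi) (not_lt.mp fun hlt => ?_)
      exact hnot (c y) hlt (hcU y)
  have hfiber_open : ∀ i : Fin k, IsOpen {y : X | c y = i} := by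
    intro i
    rw [hfiber i]
    exact ((hUclopen i).2).sdiff
      ((Set.toFinite {j : Fin k | j < i}).isClosed_biUnion fun j _ => (hUclopen j).1)
  -- the coloring of orbits
  set φ : X → (Fin n → Fin k) := fun y i => c (f^[(i : ℕ)] y) with hφ
  have hφfiber_open : ∀ v : Fin n → Fin k, IsOpen {y : X | φ y = v} := by
    intro v
    have : {y : X | φ y = v} = ⋂ i : Fin n, (f^[(i : ℕ)]) ⁻¹' {y : X | c y = v i} := by
      ext y
      simp [hφ, funext_iff]
    rw [this]
    exact isOpen_iInter_of_finite fun i => (hfiber_open (v i)).preimage (hf.iterate _)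
  have hφf : ∀ u w : X, φ u = φ w → φ (f u) = φ (f w) := by
    intro u w h
    funext j
    show c (f^[(j : ℕ)] (f u)) = c (f^[(j : ℕ)] (f w))
    rw [← Function.iterate_succ_apply, ← Function.iterate_succ_apply]
    by_cases hj : (j : ℕ) + 1 < n
    · exact congrFun h ⟨(j : ℕ) + 1, hj⟩
    · have hj' : (j : ℕ) + 1 = n := by omega
      simp only [Nat.succ_eq_add_one]
      rw [hj', hfn]
      simpa [hφ] using congrFun h ⟨0, hn⟩
  -- uniform δ making φ constant on δ-close pairs
  have hdelta : ∃ δ > (0 : ℝ), ∀ u w : X, dist u w < δ → φ u = φ w := by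
    set K : Set (X × X) := {p | φ p.1 ≠ φ p.2} with hK
    have hKclosed : IsClosed K := by
      rw [← isOpen_compl_iff]
      have : Kᶜ = ⋃ v : Fin n → Fin k, {y : X | φ y = v} ×ˢ {y : X | φ y = v} := by
        ext p
        constructor
        · intro h
          have h' : φ p.1 = φ p.2 := not_not.mp h
          exact Set.mem_iUnion.mpr ⟨φ p.2, ⟨h', rfl⟩⟩
        · intro h
          obtain ⟨v, h1, h2⟩ := Set.mem_iUnion.mp h
          show ¬φ p.1 ≠ φ p.2
          rw [not_not]
          exact Eq.trans (h1 : φ p.1 = v) (Eq.symm (h2 : φ p.2 = v))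
      rw [this]
      exact isOpen_iUnion fun v => (hφfiber_open v).prod (hφfiber_open v)
    rcases K.eq_empty_or_nonempty with hKe | hKne
    · refine ⟨1, one_pos, fun u w _ => ?_⟩
      by_contra hne
      have hmem : (u, w) ∈ K := hne
      rw [hKe] at hmem
      exact hmem
    · obtain ⟨p, hpK, hmin⟩ := (hKclosed.isCompact).exists_isMinOn hKne
        (continuous_dist.continuousOn)
      refine ⟨dist p.1 p.2, ?_, ?_⟩
      · exact dist_pos.mpr fun hpe => hpK (congrArg (fun q => φ q) hpe)
      · intro u w hd
        by_contra hne
        have : dist p.1 p.2 ≤ dist u w := isMinOn_iff.mp hmin (u, w) hne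
        linarith
  obtain ⟨δ, hδpos, hδ⟩ := hdelta
  refine ⟨δ, hδpos, fun x hx => ⟨x 0, fun i => ?_⟩⟩
  have key : ∀ i : ℕ, φ (f^[i] (x 0)) = φ (x i) := by
    intro i
    induction i with
    | zero => simp
    | succ i ih =>
      have h1 : φ (f^[i + 1] (x 0)) = φ (f (x i)) := by
        rw [Function.iterate_succ_apply']
        exact hφf _ _ ih
      rw [h1]
      exact hδ _ _ (hx i)
  have hcc : c (f^[i] (x 0)) = c (x i) := by
    simpa [hφ] using congrFun (key i) ⟨0, hn⟩
  have h1 : f^[i] (x 0) ∈ U (c (x i)) := hcc ▸ hcU (f^[i] (x 0))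
  have h2 : x i ∈ U (c (x i)) := hcU (x i)
  have hb1 := hWsub (e (c (x i))) h1
  have hb2 := hWsub (e (c (x i))) h2
  rw [Metric.mem_ball] at hb1 hb2
  have := dist_triangle (f^[i] (x 0)) (e (c (x i))) (x i)
  rw [dist_comm (e (c (x i))) (x i)] at this
  linarith

end Aux

/-- A periodic system `(X, f)` (i.e. `f^n = id` for some `n > 0`) has shadowing if and only
if `X` is totally disconnected. -/
theorem periodic_shadowing_iff_totallyDisconnected
    {X : Type*} [MetricSpace X] [CompactSpace X]
    (f : X → X) (hf : Continuous f)
    (hper : ∃ n : ℕ, 0 < n ∧ f^[n] = id) :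
    HasShadowing f ↔ TotallyDisconnectedSpace X := by
  obtain ⟨n, hn, hfn⟩ := hper
  constructor
  · intro hsh
    refine ⟨fun t _ ht x hx y hy => ?_⟩
    by_contra hxy
    have hd : 0 < dist x y := dist_pos.mpr hxy
    obtain ⟨δ, hδ, hsp⟩ := hsh (dist x y / 2) (by linarith)
    have hchain := reflTransGen_of_isPreconnected ht hx hy hδ
    obtain ⟨m, c, hc0, hcm, hcstep⟩ := exists_chain_fun
      (fun u v h => ⟨h.2.1, h.2.1, by simpa using hδ⟩) ⟨hx, hx, by simpa using hδ⟩ hchain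
    set po : ℕ → X := fun j => f^[j] (c (j / n)) with hpo
    have hstep : ∀ j : ℕ, dist (f (po j)) (po (j + 1)) < δ := by
      intro j
      by_cases hdvd : n ∣ j + 1
      · have hid : f^[j + 1] = id := by
          obtain ⟨q, hq⟩ := hdvd
          rw [hq, Function.iterate_mul, hfn, Function.iterate_id]
        have hpj1 : po (j + 1) = c (j / n + 1) := by
          rw [hpo]
          simp only [hid, id_eq]
          rw [Nat.succ_div_of_dvd hdvd]
        have hfpj : f (po j) = c (j / n) := by
          rw [hpo]
          simp only
          rw [← Function.iterate_succ_apply' f j, hid, id_eq]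
        rw [hpj1, hfpj]
        exact (hcstep (j / n)).2.2
      · have hpj1 : po (j + 1) = f^[j + 1] (c (j / n)) := by
          rw [hpo]
          simp only
          rw [Nat.succ_div_of_not_dvd hdvd]
        have hfpj : f (po j) = f^[j + 1] (c (j / n)) := by
          rw [hpo]
          simp only
          rw [← Function.iterate_succ_apply' f j]
        rw [hpj1, hfpj, dist_self]
        exact hδ
    obtain ⟨z, hz⟩ := hsp po hstep
    have h0 : dist z x < dist x y / 2 := by
      have := hz 0
      simpa [hpo, hc0] using this
    have h1 : dist z y < dist x y / 2 := by
      have hzm := hz (n * m)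
      have hid : f^[n * m] = id := by
        rw [Function.iterate_mul, hfn, Function.iterate_id]
      have hpom : po (n * m) = y := by
        rw [hpo]
        simp only [hid, id_eq]
        rw [Nat.mul_div_cancel_left m hn]
        exact hcm m le_rfl
      rw [hid, hpom] at hzm
      simpa using hzm
    have htri := dist_triangle x z y
    rw [dist_comm x z] at htri
    linarith
  · intro htd
    exact hasShadowing_of_totallyDisconnected f hf hn hfn
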